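/- Let d ≥ 1, α ∈ [0,1), and r = (r_0, ..., r_{d-1}) ∈ ℝ^d with Σ_i |r_i| ≤ α and Σ_{i : r_i < 0} r_i > α - 1. Define τ(z_0,...,z_{d-1}) = (z_1,...,z_{d-1}, z_d) where z_d is the unique integer with 0 ≤ r_0 z_0 + ... + r_{d-1} z_{d-1} + z_d + α < 1. Then the set V = {-1,0,1}^d is invariant under τ, and the unique periodic point of τ in V is the zero vector; consequently every z ∈ V satisfies τ^k(z) = 0 for some k. -/

import Mathlib

/-- The d-dimensional α-SRS map `τ_{r,α}` on `ℤ^d`. -/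
noncomputable def srsMap (d : ℕ) (r : Fin d → ℝ) (α : ℝ) (z : Fin d → ℤ) : Fin d → ℤ :=
  fun i => if h : (i : ℕ) + 1 < d then z ⟨(i : ℕ) + 1, h⟩
    else -⌊(∑ j, r j * z j) + α⌋

section Aux

variable {d : ℕ} {r : Fin d → ℝ} {α : ℝ}

lemma srs_sum_abs_bound (h1 : ∑ i, |r i| ≤ α) {z : Fin d → ℤ}
    (hz : ∀ i, z i = -1 ∨ z i = 0 ∨ z i = 1) :
    |∑ j, r j * (z j : ℝ)| ≤ α := by
  refine le_trans (Finset.abs_sum_le_sum_abs _ _) (le_trans (Finset.sum_le_sum ?_) h1)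
  intro j _
  rcases hz j with h | h | h <;> simp [h, abs_mul]

lemma srs_floor_mem (hα : α ∈ Set.Ico (0 : ℝ) 1) (h1 : ∑ i, |r i| ≤ α) {z : Fin d → ℤ}
    (hz : ∀ i, z i = -1 ∨ z i = 0 ∨ z i = 1) :
    ⌊(∑ j, r j * (z j : ℝ)) + α⌋ = 0 ∨ ⌊(∑ j, r j * (z j : ℝ)) + α⌋ = 1 := by
  have h := abs_le.mp (srs_sum_abs_bound h1 hz)
  have h0 : (0 : ℤ) ≤ ⌊(∑ j, r j * (z j : ℝ)) + α⌋ := Int.floor_nonneg.mpr (by linarith [h.1])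
  have h2 : ⌊(∑ j, r j * (z j : ℝ)) + α⌋ < 2 := by
    apply Int.floor_lt.mpr
    push_cast
    linarith [h.2, hα.2]
  omega

lemma srs_floor_zero (hα : α ∈ Set.Ico (0 : ℝ) 1) (h1 : ∑ i, |r i| ≤ α)
    (h2 : ∑ i ∈ Finset.univ.filter (fun i => r i < 0), r i > α - 1) {z : Fin d → ℤ}
    (hz : ∀ i, z i = -1 ∨ z i = 0) :
    ⌊(∑ j, r j * (z j : ℝ)) + α⌋ = 0 := by
  have hb := abs_le.mp (srs_sum_abs_bound h1 (fun i => (hz i).imp id Or.inl))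
  have hup : ∑ j, r j * (z j : ℝ) ≤ ∑ j, max 0 (-(r j)) := by
    refine Finset.sum_le_sum fun j _ => ?_
    rcases hz j with h | h <;> simp [h, le_max_left, le_max_right]
  have hmax : ∑ j, max 0 (-(r j))
      = ∑ i ∈ Finset.univ.filter (fun i => r i < 0), (-(r i)) := by
    rw [Finset.sum_filter]
    refine Finset.sum_congr rfl fun j _ => ?_
    by_cases h : r j < 0
    · simp [h, max_eq_right (by linarith : (0:ℝ) ≤ -(r j))]
    · simp [h, max_eq_left (by linarith [not_lt.mp h] : -(r j) ≤ 0)]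
  rw [hmax, Finset.sum_neg_distrib] at hup
  apply Int.floor_eq_zero_iff.mpr
  constructor
  · linarith [hb.1]
  · linarith

lemma srs_inv (hα : α ∈ Set.Ico (0 : ℝ) 1) (h1 : ∑ i, |r i| ≤ α) {z : Fin d → ℤ}
    (hz : ∀ i, z i = -1 ∨ z i = 0 ∨ z i = 1) :
    ∀ i, srsMap d r α z i = -1 ∨ srsMap d r α z i = 0 ∨ srsMap d r α z i = 1 := by
  intro i
  unfold srsMap
  split
  · exact hz _
  · rcases srs_floor_mem hα h1 hz with h | h
    · right; left; simp [h]
    · left; simp [h]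

lemma srs_iter_inv (hα : α ∈ Set.Ico (0 : ℝ) 1) (h1 : ∑ i, |r i| ≤ α) {z : Fin d → ℤ}
    (hz : ∀ i, z i = -1 ∨ z i = 0 ∨ z i = 1) (m : ℕ) :
    ∀ i, (srsMap d r α)^[m] z i = -1 ∨ (srsMap d r α)^[m] z i = 0 ∨
      (srsMap d r α)^[m] z i = 1 := by
  induction m with
  | zero => exact hz
  | succ m ih =>
    rw [Function.iterate_succ_apply']
    exact srs_inv hα h1 ih

lemma srs_iter_neg (hα : α ∈ Set.Ico (0 : ℝ) 1) (h1 : ∑ i, |r i| ≤ α) (m : ℕ) :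
    ∀ z : Fin d → ℤ, (∀ i, z i = -1 ∨ z i = 0 ∨ z i = 1) →
    ∀ i : Fin d, d ≤ (i : ℕ) + m →
      (srsMap d r α)^[m] z i = -1 ∨ (srsMap d r α)^[m] z i = 0 := by
  induction m with
  | zero => intro z _ i hi; exact absurd i.isLt (by omega)
  | succ m ih =>
    intro z hz i hi
    rw [Function.iterate_succ_apply']
    have hw := srs_iter_inv hα h1 hz m
    set w := (srsMap d r α)^[m] z with hwdef
    show srsMap d r α w i = -1 ∨ srsMap d r α w i = 0
    unfold srsMap
    split
    · next h => exact ih z hz ⟨(i : ℕ) + 1, h⟩ (show d ≤ (i : ℕ) + 1 + m by omega)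
    · rcases srs_floor_mem hα h1 hw with h | h
      · right; simp [h]
      · left; simp [h]

lemma srs_W_inv (hα : α ∈ Set.Ico (0 : ℝ) 1) (h1 : ∑ i, |r i| ≤ α)
    (h2 : ∑ i ∈ Finset.univ.filter (fun i => r i < 0), r i > α - 1) {z : Fin d → ℤ}
    (hz : ∀ i, z i = -1 ∨ z i = 0) :
    ∀ i, srsMap d r α z i = -1 ∨ srsMap d r α z i = 0 := by
  intro i
  unfold srsMap
  split
  · exact hz _
  · right; simp [srs_floor_zero hα h1 h2 hz]

lemma srs_W_iter (hα : α ∈ Set.Ico (0 : ℝ) 1) (h1 : ∑ i, |r i| ≤ α)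
    (h2 : ∑ i ∈ Finset.univ.filter (fun i => r i < 0), r i > α - 1) (m : ℕ)
    (z : Fin d → ℤ) (hz : ∀ i, z i = -1 ∨ z i = 0) :
    ∀ i, (srsMap d r α)^[m] z i = -1 ∨ (srsMap d r α)^[m] z i = 0 := by
  induction m with
  | zero => exact hz
  | succ m ih =>
    rw [Function.iterate_succ_apply']
    exact srs_W_inv hα h1 h2 ih

lemma srs_iter_zero (hα : α ∈ Set.Ico (0 : ℝ) 1) (h1 : ∑ i, |r i| ≤ α)
    (h2 : ∑ i ∈ Finset.univ.filter (fun i => r i < 0), r i > α - 1) (m : ℕ) :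
    ∀ z : Fin d → ℤ, (∀ i, z i = -1 ∨ z i = 0) →
    ∀ i : Fin d, d ≤ (i : ℕ) + m → (srsMap d r α)^[m] z i = 0 := by
  induction m with
  | zero => intro z _ i hi; exact absurd i.isLt (by omega)
  | succ m ih =>
    intro z hz i hi
    rw [Function.iterate_succ_apply']
    have hw : ∀ j, (srsMap d r α)^[m] z j = -1 ∨ (srsMap d r α)^[m] z j = 0 :=
      srs_W_iter hα h1 h2 m z hz
    set w := (srsMap d r α)^[m] z with hwdef
    show srsMap d r α w i = 0
    unfold srsMap
    split
    · next h => exact ih z hz ⟨(i : ℕ) + 1, h⟩ (show d ≤ (i : ℕ) + 1 + m by omega)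
    · simp [srs_floor_zero hα h1 h2 hw]

end Aux

theorem stmt10 (d : ℕ) (hd : 1 ≤ d) (α : ℝ) (hα : α ∈ Set.Ico (0 : ℝ) 1)
    (r : Fin d → ℝ) (h1 : ∑ i, |r i| ≤ α)
    (h2 : ∑ i ∈ Finset.univ.filter (fun i => r i < 0), r i > α - 1) :
    let V : Set (Fin d → ℤ) := {z | ∀ i, z i = -1 ∨ z i = 0 ∨ z i = 1}
    (∀ z ∈ V, srsMap d r α z ∈ V) ∧
    (∀ z ∈ V, ∀ k : ℕ, 0 < k → (srsMap d r α)^[k] z = z → z = 0) ∧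
    (∀ z ∈ V, ∃ k : ℕ, (srsMap d r α)^[k] z = 0) := by
  intro V
  have hfix : srsMap d r α 0 = 0 := by
    funext i
    unfold srsMap
    split
    · rfl
    · simp only [Pi.zero_apply, Int.cast_zero, mul_zero, Finset.sum_const_zero, zero_add,
        Int.floor_eq_zero_iff.mpr hα, neg_zero]
  have hzero : ∀ z ∈ V, (srsMap d r α)^[2 * d] z = 0 := by
    intro z hz
    have hW : ∀ i, (srsMap d r α)^[d] z i = -1 ∨ (srsMap d r α)^[d] z i = 0 :=
      fun i => srs_iter_neg hα h1 d z hz i (Nat.le_add_left d i)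
    have hsplit : (srsMap d r α)^[2 * d] z
        = (srsMap d r α)^[d] ((srsMap d r α)^[d] z) := by
      rw [← Function.iterate_add_apply]
      congr 1
      ring
    rw [hsplit]
    funext i
    exact srs_iter_zero hα h1 h2 d _ hW i (Nat.le_add_left d i)
  refine ⟨fun z hz => srs_inv hα h1 hz, ?_, fun z hz => ⟨2 * d, hzero z hz⟩⟩
  intro z hz k hk hper
  have hN : 2 * d ≤ k * (2 * d) := Nat.le_mul_of_pos_left (2 * d) hk
  have hiter : (srsMap d r α)^[k * (2 * d)] z = z := by
    rw [Function.iterate_mul]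
    exact Function.iterate_fixed hper (2 * d)
  calc z = (srsMap d r α)^[k * (2 * d)] z := hiter.symm
    _ = (srsMap d r α)^[k * (2 * d) - 2 * d] ((srsMap d r α)^[2 * d] z) := by
        rw [← Function.iterate_add_apply]
        congr 1
        omega
    _ = (srsMap d r α)^[k * (2 * d) - 2 * d] 0 := by rw [hzero z hz]
    _ = 0 := Function.iterate_fixed hfix _
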